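/- Let G = (V,E) be a finite simple graph on V = {1,…,n} with n ≥ 1 and let J be any set of subsets of V. Then z^E_J(G) ≤ z^C_J(G). -/

import Mathlib

open Matrix

noncomputable section

/-- A stable set vector of a graph `G`: a 0/1 vector with `s i * s j = 0` on edges. -/
def IsStableVec {V : Type*} (G : SimpleGraph V) (s : V → ℝ) : Prop :=
  (∀ i, s i = 0 ∨ s i = 1) ∧ ∀ i j, G.Adj i j → s i * s j = 0

/-- The squared stable set polytope `STAB²(G) = conv{ s sᵀ : s ∈ S(G) }`. -/
def stab2 {V : Type*} (G : SimpleGraph V) : Set (Matrix V V ℝ) :=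
  convexHull ℝ { M | ∃ s, IsStableVec G s ∧ M = Matrix.vecMulVec s s }

/-- The scaled squared stable set polytope
`SSTAB²(G) = conv({ (1/(sᵀs)) s sᵀ : s ∈ S(G), s ≠ 0 } ∪ {0})`. -/
def sstab2 {V : Type*} [Fintype V] (G : SimpleGraph V) : Set (Matrix V V ℝ) :=
  convexHull ℝ
    ({ M | ∃ s, IsStableVec G s ∧ s ≠ 0 ∧
        M = (∑ k, s k * s k)⁻¹ • Matrix.vecMulVec s s } ∪ {(0 : Matrix V V ℝ)})

/-- The feasible region `TH²(G)` of the SDP (Tn+1): pairs `(x, X)` with `X` symmetric,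
`diag X = x`, `X i j = 0` on edges and `X - x xᵀ` positive semidefinite. -/
def th2 {n : ℕ} (G : SimpleGraph (Fin n)) :
    Set ((Fin n → ℝ) × Matrix (Fin n) (Fin n) ℝ) :=
  { p | p.2.IsSymm ∧ (∀ i, p.2 i i = p.1 i) ∧
      (∀ i j, G.Adj i j → p.2 i j = 0) ∧ (p.2 - Matrix.vecMulVec p.1 p.1).PosSemidef }

/-- The feasible region `CTH²(G)` of the SDP (Tn): symmetric PSD matrices with trace 1
vanishing on edges. -/
def cth2 {n : ℕ} (G : SimpleGraph (Fin n)) : Set (Matrix (Fin n) (Fin n) ℝ) :=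
  { X | X.IsSymm ∧ X.trace = 1 ∧ (∀ i j, G.Adj i j → X i j = 0) ∧ X.PosSemidef }

/-- The principal submatrix `X_I` of `X` indexed by `I`. -/
def subMat {n : ℕ} (X : Matrix (Fin n) (Fin n) ℝ) (I : Finset (Fin n)) :
    Matrix (I : Set (Fin n)) (I : Set (Fin n)) ℝ :=
  X.submatrix Subtype.val Subtype.val

/-- The exact subgraph constraint (ESC) for the subgraph of `G` induced by `I`. -/
def escFeas {n : ℕ} (G : SimpleGraph (Fin n)) (X : Matrix (Fin n) (Fin n) ℝ)
    (I : Finset (Fin n)) : Prop :=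
  subMat X I ∈ stab2 (G.induce (I : Set (Fin n)))

/-- The scaled exact subgraph constraint (SESC) for the subgraph of `G` induced by `I`. -/
def sescFeas {n : ℕ} (G : SimpleGraph (Fin n)) (X : Matrix (Fin n) (Fin n) ℝ)
    (I : Finset (Fin n)) : Prop :=
  subMat X I ∈ sstab2 (G.induce (I : Set (Fin n)))

/-- `z^E_J(G)`: optimal value of (Tn+1) with the ESCs for all `I ∈ J`. -/
def zE {n : ℕ} (G : SimpleGraph (Fin n)) (J : Set (Finset (Fin n))) : ℝ :=
  sSup { r | ∃ x X, (x, X) ∈ th2 G ∧ (∀ I ∈ J, escFeas G X I) ∧ r = ∑ i, x i }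

/-- `z^C_J(G)`: optimal value of (Tn) with the ESCs for all `I ∈ J`. -/
def zC {n : ℕ} (G : SimpleGraph (Fin n)) (J : Set (Finset (Fin n))) : ℝ :=
  sSup { r | ∃ X, X ∈ cth2 G ∧ (∀ I ∈ J, escFeas G X I) ∧ r = ∑ i, ∑ j, X i j }

/-- `z^S_J(G)`: optimal value of (Tn) with the SESCs for all `I ∈ J`. -/
def zS {n : ℕ} (G : SimpleGraph (Fin n)) (J : Set (Finset (Fin n))) : ℝ :=
  sSup { r | ∃ X, X ∈ cth2 G ∧ (∀ I ∈ J, sescFeas G X I) ∧ r = ∑ i, ∑ j, X i j }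

/-- The collection `J_k` of all vertex subsets of cardinality `k`. -/
def Jk (n k : ℕ) : Set (Finset (Fin n)) := { I | I.card = k }

set_option linter.unusedSectionVars false
variable {m : Type*} [Fintype m] [DecidableEq m]

lemma quad_form (X : Matrix m m ℝ) (v : m → ℝ) :
    v ⬝ᵥ X *ᵥ v = ∑ i, ∑ j, v i * X i j * v j := by
  simp [dotProduct, Matrix.mulVec, Finset.mul_sum, mul_assoc]

lemma psd_quad {X : Matrix m m ℝ} (hX : X.PosSemidef) (v : m → ℝ) :
    0 ≤ ∑ i, ∑ j, v i * X i j * v j := by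
  have := hX.dotProduct_mulVec_nonneg v
  rwa [star_trivial, quad_form] at this

lemma psd_vecMulVec (s : m → ℝ) : (Matrix.vecMulVec s s).PosSemidef := by
  refine Matrix.posSemidef_iff_dotProduct_mulVec.mpr ⟨?_, ?_⟩
  · ext i j; simp [Matrix.vecMulVec_apply, mul_comm, Matrix.conjTranspose_apply]
  · intro v
    rw [star_trivial, quad_form]
    have h : ∑ i, ∑ j, v i * Matrix.vecMulVec s s i j * v j
        = (∑ i, v i * s i) * (∑ j, s j * v j) := by
      rw [Finset.sum_mul_sum]
      simp only [Matrix.vecMulVec_apply]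
      apply Finset.sum_congr rfl; intro i _
      apply Finset.sum_congr rfl; intro j _; ring
    rw [h]
    have : (∑ j, s j * v j) = ∑ i, v i * s i := by
      apply Finset.sum_congr rfl; intro i _; ring
    rw [this]; exact mul_self_nonneg _

lemma psd_add {A B : Matrix m m ℝ} (hA : A.PosSemidef) (hB : B.PosSemidef) :
    (A + B).PosSemidef := by
  refine Matrix.posSemidef_iff_dotProduct_mulVec.mpr ⟨hA.1.add hB.1, fun x => ?_⟩
  have := add_nonneg (hA.dotProduct_mulVec_nonneg x) (hB.dotProduct_mulVec_nonneg x)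
  simpa [Matrix.add_mulVec, dotProduct_add] using this

lemma psd_smul {A : Matrix m m ℝ} (hA : A.PosSemidef) {c : ℝ} (hc : 0 ≤ c) :
    (c • A).PosSemidef := by
  refine Matrix.posSemidef_iff_dotProduct_mulVec.mpr ⟨?_, fun x => ?_⟩
  · ext i j
    simp only [Matrix.conjTranspose_apply, Matrix.smul_apply, star_trivial, smul_eq_mul]
    rw [show A j i = A i j from by rw [← hA.1.apply i j]; simp]
  · have := mul_nonneg hc (hA.dotProduct_mulVec_nonneg x)
    simpa [Matrix.smul_mulVec, dotProduct_smul, smul_eq_mul] using this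

lemma psd_entry_bound {X : Matrix m m ℝ} (hX : X.PosSemidef) (i j : m) :
    X i j + X j i ≤ X i i + X j j := by
  have h := psd_quad hX (fun k => (if k = i then (1:ℝ) else 0) - (if k = j then 1 else 0))
  simp only [sub_mul, mul_sub, ite_mul, one_mul, zero_mul, mul_ite, mul_one, mul_zero] at h
  simp [Finset.sum_sub_distrib, Finset.sum_ite_eq', Finset.sum_ite_eq] at h
  linarith

section mainhelpers

variable {n : ℕ}

/-- 0 is in stab2. -/
lemma zero_mem_stab2 {V : Type*} (G : SimpleGraph V) : (0 : Matrix V V ℝ) ∈ stab2 G := by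
  apply subset_convexHull
  refine ⟨0, ⟨fun i => Or.inl rfl, fun i j _ => by simp⟩, ?_⟩
  ext i j; simp [Matrix.vecMulVec_apply]

/-- stab2 closed under scaling by c ∈ [0,1]. -/
lemma smul_mem_stab2 {V : Type*} (G : SimpleGraph V) {M : Matrix V V ℝ}
    (hM : M ∈ stab2 G) {c : ℝ} (h0 : 0 ≤ c) (h1 : c ≤ 1) : c • M ∈ stab2 G := by
  have hc : Convex ℝ (stab2 G) := convex_convexHull ℝ _
  have := hc hM (zero_mem_stab2 G) (a := c) (b := 1 - c) h0 (by linarith) (by ring)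
  simpa using this

lemma subMat_smul (X : Matrix (Fin n) (Fin n) ℝ) (I : Finset (Fin n)) (c : ℝ) :
    subMat (c • X) I = c • subMat X I := rfl

end mainhelpers

/-- The rank-one matrix e₁e₁ᵀ is feasible for zC with all ESCs. -/
lemma one_mem_zC_set {n : ℕ} (hn : 1 ≤ n) (G : SimpleGraph (Fin n)) (J : Set (Finset (Fin n))) :
    (1 : ℝ) ∈ { r | ∃ X, X ∈ cth2 G ∧ (∀ I ∈ J, escFeas G X I) ∧ r = ∑ i, ∑ j, X i j } := by
  classical
  set i0 : Fin n := ⟨0, hn⟩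
  set e : Fin n → ℝ := fun k => if k = i0 then 1 else 0 with he
  have hstable : ∀ {W : Type} (H : SimpleGraph W) (f : W → Fin n),
      Function.Injective f → IsStableVec H (fun w => e (f w)) ∧
      (∀ a b, H.Adj a b → e (f a) * e (f b) = 0) := by
    intro W H f hf
    constructor
    · constructor
      · intro w; by_cases h : f w = i0 <;> simp [he, h]
      · intro a b hab
        by_cases ha : f a = i0
        · have : f b ≠ i0 := fun hb => H.ne_of_adj hab (hf (ha.trans hb.symm))
          simp [he, this]
        · simp [he, ha]
    · intro a b hab
      by_cases ha : f a = i0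
      · have : f b ≠ i0 := fun hb => H.ne_of_adj hab (hf (ha.trans hb.symm))
        simp [he, this]
      · simp [he, ha]
  refine ⟨Matrix.vecMulVec e e, ⟨?_, ?_, ?_, psd_vecMulVec e⟩, ?_, ?_⟩
  · ext i j; simp [Matrix.vecMulVec_apply, mul_comm]
  · simp only [Matrix.trace, Matrix.diag, Matrix.vecMulVec_apply]
    have : ∀ k, e k * e k = if k = i0 then (1:ℝ) else 0 := by
      intro k; by_cases h : k = i0 <;> simp [he, h]
    simp [this]
  · intro i j hij
    have := (hstable (W := Fin n) G id Function.injective_id).2 i j hij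
    simpa [Matrix.vecMulVec_apply] using this
  · intro I _
    unfold escFeas subMat
    apply subset_convexHull
    refine ⟨fun w => e w.val, (hstable (W := (I : Set (Fin n))) (G.induce (I : Set (Fin n))) Subtype.val Subtype.val_injective).1, ?_⟩
    ext a b; simp [Matrix.vecMulVec_apply, Matrix.submatrix_apply]
  · have h1 : ∀ i, (∑ j, Matrix.vecMulVec e e i j) = e i := by
      intro i
      simp only [Matrix.vecMulVec_apply]
      rw [← Finset.mul_sum]
      have : (∑ j, e j) = 1 := by simp [he]
      rw [this, mul_one]
    rw [show (∑ i, ∑ j, Matrix.vecMulVec e e i j) = ∑ i, e i from Finset.sum_congr rfl (fun i _ => h1 i)]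
    simp [he]

/-- The zC feasible-value set is bounded above by n. -/
lemma zC_set_bddAbove {n : ℕ} (G : SimpleGraph (Fin n)) (J : Set (Finset (Fin n))) :
    BddAbove { r | ∃ X, X ∈ cth2 G ∧ (∀ I ∈ J, escFeas G X I) ∧ r = ∑ i, ∑ j, X i j } := by
  refine ⟨n, ?_⟩
  rintro r ⟨X, ⟨-, htr, -, hpsd⟩, -, rfl⟩
  have hb : ∀ i j, X i j ≤ (X i i + X j j) / 2 := by
    intro i j
    have h1 := psd_entry_bound hpsd i j
    have h2 : X j i = X i j := by rw [← hpsd.1.apply i j]; simp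
    linarith
  calc (∑ i, ∑ j, X i j) ≤ ∑ i, ∑ j, (X i i + X j j) / 2 := by
        apply Finset.sum_le_sum; intro i _
        apply Finset.sum_le_sum; intro j _; exact hb i j
    _ = n := by
        have htr' : (∑ i, X i i) = 1 := htr
        have hsplit : ∀ i : Fin n, (∑ j, (X i i + X j j) / 2)
            = (∑ _j : Fin n, X i i / 2) + ∑ j, X j j / 2 := fun i => by
          rw [← Finset.sum_add_distrib]; apply Finset.sum_congr rfl; intros; ring
        rw [Finset.sum_congr rfl (fun i _ => hsplit i), Finset.sum_add_distrib]
        have hA : (∑ i : Fin n, ∑ _j : Fin n, X i i / 2) = n / 2 := by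
          simp only [Finset.sum_const, Finset.card_univ, Fintype.card_fin, nsmul_eq_mul]
          rw [← Finset.mul_sum, ← Finset.sum_div, htr']; ring
        have hB : (∑ _i : Fin n, ∑ j : Fin n, X j j / 2) = n / 2 := by
          have : (∑ j : Fin n, X j j / 2) = 1 / 2 := by
            rw [← Finset.sum_div, htr']
          rw [this]
          simp [Finset.sum_const]
          ring
        rw [hA, hB]; ring

theorem stmt7 {n : ℕ} (hn : 1 ≤ n) (G : SimpleGraph (Fin n))
    (J : Set (Finset (Fin n))) :
    zE G J ≤ zC G J := by
  classical
  have hbdd := zC_set_bddAbove G J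
  have h1 : (1:ℝ) ≤ zC G J := le_csSup hbdd (one_mem_zC_set hn G J)
  rw [zE]
  apply Real.sSup_le
  · rintro r ⟨x, X, ⟨hsym, hdiag, hedge, hpsd⟩, hesc, rfl⟩
    set t := ∑ i, x i with ht
    by_cases hc : t ≤ 1
    · exact le_trans hc h1
    push_neg at hc
    have ht0 : (0:ℝ) < t := lt_trans one_pos hc
    have hXpsd : X.PosSemidef := by
      have h := psd_add hpsd (psd_vecMulVec x)
      simpa using h
    have hkey : t * t ≤ ∑ i, ∑ j, X i j := by
      have h := psd_quad hpsd (fun _ => (1:ℝ))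
      simp only [one_mul, mul_one, Matrix.sub_apply, Matrix.vecMulVec_apply] at h
      have hstep : ∀ i, (∑ j, (X i j - x i * x j)) = (∑ j, X i j) - ∑ j, x i * x j :=
        fun i => Finset.sum_sub_distrib _ _
      rw [Finset.sum_congr rfl (fun i _ => hstep i), Finset.sum_sub_distrib] at h
      have hmul : (∑ i, ∑ j, x i * x j) = t * t := by
        rw [← Finset.sum_mul_sum]
      linarith
    refine le_trans ?_ (le_csSup hbdd ⟨t⁻¹ • X, ⟨?_, ?_, ?_, psd_smul hXpsd (by positivity)⟩, ?_, rfl⟩)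
    · have hsum : (∑ i, ∑ j, (t⁻¹ • X) i j) = t⁻¹ * ∑ i, ∑ j, X i j := by
        simp [Matrix.smul_apply, smul_eq_mul, Finset.mul_sum]
      rw [hsum]
      calc t = t⁻¹ * (t * t) := by field_simp
        _ ≤ t⁻¹ * ∑ i, ∑ j, X i j :=
            mul_le_mul_of_nonneg_left hkey (by positivity)
    · rw [Matrix.IsSymm, Matrix.transpose_smul, hsym]
    · rw [Matrix.trace_smul]
      have htr : X.trace = t := by
        simp only [Matrix.trace, Matrix.diag]
        exact Finset.sum_congr rfl (fun i _ => hdiag i)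
      rw [htr, smul_eq_mul, inv_mul_cancel₀ ht0.ne']
    · intro i j hij
      simp only [Matrix.smul_apply, smul_eq_mul]
      rw [show X i j = 0 from hedge i j hij, mul_zero]
    · intro I hI
      show subMat (t⁻¹ • X) I ∈ stab2 _
      rw [subMat_smul]
      exact smul_mem_stab2 _ (hesc I hI) (by positivity) (inv_le_one_of_one_le₀ (le_of_lt hc))
  · linarith
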